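/- arXiv:2102.06861 — 3 statements merged into one kernel-verified Lean document; each statement's English description precedes it below -/
import Mathlib

section
/- There is a universal constant c₀ > 0 such that for every smooth function f : ℝ² → ℝ which is 2-periodic in each variable, one has ‖f‖_{L^∞}² ≤ c₀ ( ‖f‖₀ ‖(f,∂₁f)‖₀ + ‖f‖₀^{1/2} ‖(f,∂₁f)‖₀^{1/2} ‖∂₂f‖₀^{1/2} ‖∂₂(f,∂₁f)‖₀^{1/2} ), where the L^∞ norm is also taken over the periodic cell (-1,1)². -/
open MeasureTheory

noncomputable section

/-- A point of the plane `ℝ²`. -/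
abbrev Pt := ℝ × ℝ

/-- The periodic cell `(-1,1)²`. -/
def cell : Set Pt := Set.Ioo (-1 : ℝ) 1 ×ˢ Set.Ioo (-1 : ℝ) 1

/-- `f` is 2-periodic in each variable. -/
def Periodic2 (f : Pt → ℝ) : Prop :=
  (∀ y : Pt, f (y.1 + 2, y.2) = f y) ∧ ∀ y : Pt, f (y.1, y.2 + 2) = f y

/-- Partial derivative in the first variable. -/
def p1 (f : Pt → ℝ) : Pt → ℝ := fun y => fderiv ℝ f y (1, 0)

/-- Partial derivative in the second variable. -/
def p2 (f : Pt → ℝ) : Pt → ℝ := fun y => fderiv ℝ f y (0, 1)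

/-- Iterated partial derivative `∂₁^a ∂₂^b f`. -/
def pd (a b : ℕ) (f : Pt → ℝ) : Pt → ℝ := p1^[a] (p2^[b] f)

/-- Square of the `L²((-1,1)²)` norm. -/
def L2sq (f : Pt → ℝ) : ℝ := ∫ y in cell, (f y) ^ 2

/-- The `L²((-1,1)²)` norm `‖f‖₀`. -/
def L2 (f : Pt → ℝ) : ℝ := Real.sqrt (L2sq f)

/-- Square of the Sobolev norm `‖f‖_i² = Σ_{|α| ≤ i} ‖∂^α f‖₀²`. -/
def sobSq (i : ℕ) (f : Pt → ℝ) : ℝ :=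
  ∑ a ∈ Finset.range (i + 1), ∑ b ∈ Finset.range (i + 1 - a), L2sq (pd a b f)

/-- The Sobolev norm `‖f‖_i`. -/
def sob (i : ℕ) (f : Pt → ℝ) : ℝ := Real.sqrt (sobSq i f)

/-- Square of the homogeneous seminorm `‖∇^i f‖₀² = Σ_{|α| = i} ‖∂^α f‖₀²`. -/
def gradSq (i : ℕ) (f : Pt → ℝ) : ℝ :=
  ∑ a ∈ Finset.range (i + 1), L2sq (pd a (i - a) f)

/-- Norm of a pair of functions: `‖(f,g)‖₀ = √(‖f‖₀² + ‖g‖₀²)`. -/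
def pairN (f g : Pt → ℝ) : ℝ := Real.sqrt (L2sq f + L2sq g)

lemma contDiff_p1 {f : Pt → ℝ} (hf : ContDiff ℝ (⊤ : ℕ∞) f) : ContDiff ℝ (⊤ : ℕ∞) (p1 f) := by
  have h := hf.fderiv_right (m := (⊤:ℕ∞)) (by simp)
  exact (ContinuousLinearMap.apply ℝ ℝ ((1:ℝ),(0:ℝ))).contDiff.comp h

lemma contDiff_p2 {f : Pt → ℝ} (hf : ContDiff ℝ (⊤ : ℕ∞) f) : ContDiff ℝ (⊤ : ℕ∞) (p2 f) := by
  have h := hf.fderiv_right (m := (⊤:ℕ∞)) (by simp)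
  exact (ContinuousLinearMap.apply ℝ ℝ ((0:ℝ),(1:ℝ))).contDiff.comp h

lemma fderiv_shift {f : Pt → ℝ} (hf : ContDiff ℝ (⊤ : ℕ∞) f) (c : Pt)
    (hper : ∀ z : Pt, f (z + c) = f z) (y : Pt) : fderiv ℝ f (y + c) = fderiv ℝ f y := by
  have hd : ∀ z : Pt, HasFDerivAt f (fderiv ℝ f z) z :=
    fun z => (hf.differentiable (by simp) z).hasFDerivAt
  have h1 : HasFDerivAt (fun z : Pt => f (z + c)) (fderiv ℝ f (y + c)) y := by
    have := (hd (y + c)).comp y ((hasFDerivAt_id y).add_const c)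
    simpa [Function.comp_def] using this
  have h2 : HasFDerivAt f (fderiv ℝ f (y + c)) y := by
    have : (fun z : Pt => f (z + c)) = f := funext hper
    rwa [this] at h1
  exact h2.fderiv ▸ rfl

lemma periodic2_shift1 {f : Pt → ℝ} (h : Periodic2 f) (z : Pt) : f (z + ((2:ℝ),(0:ℝ))) = f z := by
  have e : z + ((2:ℝ),(0:ℝ)) = ((z.1 + 2, z.2) : Pt) := by simp [Prod.ext_iff]
  rw [e]; exact h.1 z

lemma periodic2_shift2 {f : Pt → ℝ} (h : Periodic2 f) (z : Pt) : f (z + ((0:ℝ),(2:ℝ))) = f z := by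
  have e : z + ((0:ℝ),(2:ℝ)) = ((z.1, z.2 + 2) : Pt) := by simp [Prod.ext_iff]
  rw [e]; exact h.2 z

lemma periodic2_p1 {f : Pt → ℝ} (hf : ContDiff ℝ (⊤ : ℕ∞) f) (h : Periodic2 f) :
    Periodic2 (p1 f) := by
  constructor
  · intro y
    have := fderiv_shift hf ((2:ℝ),(0:ℝ)) (periodic2_shift1 h) y
    simp only [p1]
    rw [show ((y.1+2, y.2) : Pt) = y + ((2:ℝ),(0:ℝ)) by simp [Prod.ext_iff], this]
  · intro y
    have := fderiv_shift hf ((0:ℝ),(2:ℝ)) (periodic2_shift2 h) y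
    simp only [p1]
    rw [show ((y.1, y.2+2) : Pt) = y + ((0:ℝ),(2:ℝ)) by simp [Prod.ext_iff], this]

lemma periodic2_p2 {f : Pt → ℝ} (hf : ContDiff ℝ (⊤ : ℕ∞) f) (h : Periodic2 f) :
    Periodic2 (p2 f) := by
  constructor
  · intro y
    have := fderiv_shift hf ((2:ℝ),(0:ℝ)) (periodic2_shift1 h) y
    simp only [p2]
    rw [show ((y.1+2, y.2) : Pt) = y + ((2:ℝ),(0:ℝ)) by simp [Prod.ext_iff], this]
  · intro y
    have := fderiv_shift hf ((0:ℝ),(2:ℝ)) (periodic2_shift2 h) y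
    simp only [p2]
    rw [show ((y.1, y.2+2) : Pt) = y + ((0:ℝ),(2:ℝ)) by simp [Prod.ext_iff], this]

lemma sliceDeriv1 {f : Pt → ℝ} (hf : ContDiff ℝ (⊤ : ℕ∞) f) (t : ℝ) (s : ℝ) :
    HasDerivAt (fun x => f (x, t)) (p1 f (s, t)) s := by
  have h1 : HasFDerivAt f (fderiv ℝ f (s,t)) (s,t) :=
    (hf.differentiable (by simp) (s,t)).hasFDerivAt
  have h2 : HasDerivAt (fun x : ℝ => ((x, t) : Pt)) ((1:ℝ),(0:ℝ)) s :=
    (hasDerivAt_id s).prodMk (hasDerivAt_const s t)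
  simpa [p1, Function.comp_def] using h1.comp_hasDerivAt s h2

lemma sliceDeriv2 {f : Pt → ℝ} (hf : ContDiff ℝ (⊤ : ℕ∞) f) (x : ℝ) (s : ℝ) :
    HasDerivAt (fun t => f (x, t)) (p2 f (x, s)) s := by
  have h1 : HasFDerivAt f (fderiv ℝ f (x,s)) (x,s) :=
    (hf.differentiable (by simp) (x,s)).hasFDerivAt
  have h2 : HasDerivAt (fun t : ℝ => ((x, t) : Pt)) ((0:ℝ),(1:ℝ)) s :=
    (hasDerivAt_const s x).prodMk (hasDerivAt_id s)
  simpa [p2, Function.comp_def] using h1.comp_hasDerivAt s h2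

lemma p1_p2_comm {f : Pt → ℝ} (hf : ContDiff ℝ (⊤ : ℕ∞) f) : p1 (p2 f) = p2 (p1 f) := by
  funext y
  have hd : ∀ z : Pt, HasFDerivAt f (fderiv ℝ f z) z :=
    fun z => (hf.differentiable (by simp) z).hasFDerivAt
  have hF : ContDiff ℝ (⊤ : ℕ∞) (fderiv ℝ f) := hf.fderiv_right (m := (⊤:ℕ∞)) (by simp)
  have hdF : HasFDerivAt (fderiv ℝ f) (fderiv ℝ (fderiv ℝ f) y) y :=
    (hF.differentiable (by simp) y).hasFDerivAt
  have hsym := second_derivative_symmetric hd hdF ((1:ℝ),(0:ℝ)) ((0:ℝ),(1:ℝ))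
  have e1 : p1 (p2 f) y = (fderiv ℝ (fderiv ℝ f) y ((1:ℝ),(0:ℝ))) ((0:ℝ),(1:ℝ)) := by
    have : p2 f = fun z => (ContinuousLinearMap.apply ℝ ℝ ((0:ℝ),(1:ℝ))) (fderiv ℝ f z) := rfl
    rw [p1, this]
    have hc : HasFDerivAt (fun z => (ContinuousLinearMap.apply ℝ ℝ ((0:ℝ),(1:ℝ))) (fderiv ℝ f z))
        (((ContinuousLinearMap.apply ℝ ℝ ((0:ℝ),(1:ℝ)))).comp (fderiv ℝ (fderiv ℝ f) y)) y :=
      ((ContinuousLinearMap.apply ℝ ℝ ((0:ℝ),(1:ℝ))).hasFDerivAt (x := fderiv ℝ f y)).comp y hdF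
    rw [hc.fderiv]
    rfl
  have e2 : p2 (p1 f) y = (fderiv ℝ (fderiv ℝ f) y ((0:ℝ),(1:ℝ))) ((1:ℝ),(0:ℝ)) := by
    have : p1 f = fun z => (ContinuousLinearMap.apply ℝ ℝ ((1:ℝ),(0:ℝ))) (fderiv ℝ f z) := rfl
    rw [p2, this]
    have hc : HasFDerivAt (fun z => (ContinuousLinearMap.apply ℝ ℝ ((1:ℝ),(0:ℝ))) (fderiv ℝ f z))
        (((ContinuousLinearMap.apply ℝ ℝ ((1:ℝ),(0:ℝ)))).comp (fderiv ℝ (fderiv ℝ f) y)) y :=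
      ((ContinuousLinearMap.apply ℝ ℝ ((1:ℝ),(0:ℝ))).hasFDerivAt (x := fderiv ℝ f y)).comp y hdF
    rw [hc.fderiv]
    rfl
  rw [e1, e2, hsym]

lemma csAbs {p q : ℝ → ℝ} (hp : Continuous p) (hq : Continuous q) {a b : ℝ} (hab : a ≤ b) :
    (∫ t in a..b, |p t * q t|) ≤
      Real.sqrt (∫ t in a..b, (p t)^2) * Real.sqrt (∫ t in a..b, (q t)^2) := by
  set P := ∫ t in a..b, (p t)^2 with hP
  set Q := ∫ t in a..b, (q t)^2 with hQ
  have hP0 : 0 ≤ P := intervalIntegral.integral_nonneg hab (fun t _ => sq_nonneg _)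
  have hQ0 : 0 ≤ Q := intervalIntegral.integral_nonneg hab (fun t _ => sq_nonneg _)
  have key : ∀ ε : ℝ, 0 < ε → (∫ t in a..b, |p t * q t|) ≤ Real.sqrt ((P+ε)*(Q+ε)) := by
    intro ε hε
    have hPε : (0:ℝ) < P + ε := by linarith
    have hQε : (0:ℝ) < Q + ε := by linarith
    set lam := Real.sqrt (Q+ε) / Real.sqrt (P+ε) with hlam
    have hsP : 0 < Real.sqrt (P+ε) := Real.sqrt_pos.mpr hPε
    have hsQ : 0 < Real.sqrt (Q+ε) := Real.sqrt_pos.mpr hQε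
    have hlam0 : 0 < lam := div_pos hsQ hsP
    have hbound : ∀ t, |p t * q t| ≤ (lam * (p t)^2 + (q t)^2 / lam)/2 := by
      intro t
      rw [abs_mul, ← sq_abs (p t), ← sq_abs (q t), ← sub_nonneg]
      have expand : (lam * |p t|^2 + |q t|^2 / lam)/2 - |p t| * |q t|
          = (lam * |p t| - |q t|)^2 / (2*lam) := by
        rw [div_sub' (by norm_num : (2:ℝ) ≠ 0)]
        rw [div_eq_div_iff (by norm_num) (by positivity)]
        field_simp
        ring_nf
        try simp only [sq_abs]
        try ring
      rw [expand]
      positivity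
    have hint1 : IntervalIntegrable (fun t => |p t * q t|) volume a b :=
      ((hp.mul hq).abs).intervalIntegrable a b
    have hint2 : IntervalIntegrable (fun t => (lam * (p t)^2 + (q t)^2 / lam)/2) volume a b := by
      apply Continuous.intervalIntegrable
      continuity
    calc (∫ t in a..b, |p t * q t|)
        ≤ ∫ t in a..b, (lam * (p t)^2 + (q t)^2 / lam)/2 :=
          intervalIntegral.integral_mono_on hab hint1 hint2 (fun t _ => hbound t)
      _ = (lam * P + Q / lam)/2 := by
          rw [intervalIntegral.integral_div]
          congr 1
          rw [intervalIntegral.integral_add (f := fun t => lam * (p t)^2) (g := fun t => (q t)^2 / lam) ((continuous_const.mul (hp.pow 2)).intervalIntegrable a b)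
            (((hq.pow 2).div_const lam).intervalIntegrable a b),
            intervalIntegral.integral_const_mul, intervalIntegral.integral_div]
      _ ≤ (lam * (P+ε) + (Q+ε) / lam)/2 := by
          have := hlam0
          gcongr <;> linarith
      _ = Real.sqrt ((P+ε)*(Q+ε)) := by
          have e1 : lam * (P+ε) = Real.sqrt (P+ε) * Real.sqrt (Q+ε) := by
            rw [hlam, div_mul_eq_mul_div, div_eq_iff hsP.ne']
            linear_combination (-Real.sqrt (Q+ε)) * Real.sq_sqrt hPε.le
          have e2 : (Q+ε) / lam = Real.sqrt (P+ε) * Real.sqrt (Q+ε) := by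
            rw [hlam, div_div_eq_mul_div, div_eq_iff hsQ.ne']
            linear_combination (-Real.sqrt (P+ε)) * Real.sq_sqrt hQε.le
          rw [e1, e2, Real.sqrt_mul hPε.le]
          ring
  have ht : Filter.Tendsto (fun ε : ℝ => Real.sqrt ((P+ε)*(Q+ε))) (nhdsWithin 0 (Set.Ioi 0))
      (nhds (Real.sqrt (P*Q))) := by
    have hc : Continuous (fun ε : ℝ => Real.sqrt ((P+ε)*(Q+ε))) := by continuity
    have := hc.tendsto 0
    simp only [add_zero] at this
    exact this.mono_left nhdsWithin_le_nhds
  rw [← Real.sqrt_mul hP0]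
  exact ge_of_tendsto ht (Filter.eventually_iff_exists_mem.mpr
    ⟨Set.Ioi 0, self_mem_nhdsWithin, fun ε hε => key ε hε⟩)

lemma csSqrt {u v : ℝ → ℝ} (hu : Continuous u) (hv : Continuous v)
    (hu0 : ∀ t, 0 ≤ u t) (hv0 : ∀ t, 0 ≤ v t) {a b : ℝ} (hab : a ≤ b) :
    (∫ t in a..b, Real.sqrt (u t) * Real.sqrt (v t)) ≤
      Real.sqrt (∫ t in a..b, u t) * Real.sqrt (∫ t in a..b, v t) := by
  have h := csAbs (hu.sqrt) (hv.sqrt) hab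
  have e1 : ∀ t, |Real.sqrt (u t) * Real.sqrt (v t)| = Real.sqrt (u t) * Real.sqrt (v t) :=
    fun t => abs_of_nonneg (by positivity)
  have e2 : ∀ t, (Real.sqrt (u t))^2 = u t := fun t => Real.sq_sqrt (hu0 t)
  have e3 : ∀ t, (Real.sqrt (v t))^2 = v t := fun t => Real.sq_sqrt (hv0 t)
  simpa only [e1, e2, e3] using h

lemma agmon1d {g g' : ℝ → ℝ} (hg : Continuous g) (hg' : Continuous g')
    (hd : ∀ t, HasDerivAt g (g' t) t) (hper : Function.Periodic g 2) (x : ℝ) :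
    (g x)^2 ≤ (1/2) * (∫ t in (-1:ℝ)..1, (g t)^2)
      + 2 * (Real.sqrt (∫ t in (-1:ℝ)..1, (g t)^2) * Real.sqrt (∫ t in (-1:ℝ)..1, (g' t)^2)) := by
  -- the derivative is periodic too
  have hper' : Function.Periodic g' 2 := by
    intro t
    have h1 : HasDerivAt (fun s => g (s+2)) (g' (t+2)) t := by
      simpa [Function.comp_def] using (hd (t+2)).comp t ((hasDerivAt_id t).add_const 2)
    have h2 : (fun s => g (s+2)) = g := funext fun s => hper s
    rw [h2] at h1
    exact h1.unique (hd t)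
  set D := ∫ s in (x-2)..x, |g s * g' s| with hD
  have hDint : IntervalIntegrable (fun s => |g s * g' s|) volume (x-2) x :=
    ((hg.mul hg').abs).intervalIntegrable _ _
  -- FTC bound
  have key : ∀ t ∈ Set.Icc (x-2) x, (g x)^2 ≤ (g t)^2 + 2 * D := by
    intro t ht
    have hftc : ∫ s in t..x, 2 * (g s * g' s) = (g x)^2 - (g t)^2 := by
      apply intervalIntegral.integral_eq_sub_of_hasDerivAt
      · intro s _
        have := (hd s).pow 2
        simpa [mul_comm, mul_assoc, mul_left_comm, Pi.pow_def] using this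
      · exact (continuous_const.mul (hg.mul hg')).intervalIntegrable _ _
    have habs : (g x)^2 - (g t)^2 ≤ 2 * D := by
      rw [← hftc]
      calc ∫ s in t..x, 2 * (g s * g' s) ≤ ∫ s in t..x, 2 * |g s * g' s| := by
            apply intervalIntegral.integral_mono_on ht.2
            · exact (continuous_const.mul (hg.mul hg')).intervalIntegrable _ _
            · exact (continuous_const.mul ((hg.mul hg').abs)).intervalIntegrable _ _
            · intro s _; have := le_abs_self (g s * g' s); linarith
        _ ≤ ∫ s in (x-2)..x, 2 * |g s * g' s| := by
            apply intervalIntegral.integral_mono_interval ht.1 ht.2 le_rfl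
            · filter_upwards with s; positivity
            · exact (continuous_const.mul ((hg.mul hg').abs)).intervalIntegrable _ _
        _ = 2 * D := by rw [hD, ← intervalIntegral.integral_const_mul]
    linarith
  -- integrate the bound over t ∈ [x-2, x]
  have hmono : (∫ t in (x-2)..x, (g x)^2) ≤ ∫ t in (x-2)..x, ((g t)^2 + 2 * D) := by
    apply intervalIntegral.integral_mono_on (by linarith)
    · exact intervalIntegrable_const
    · exact ((hg.pow 2).add continuous_const).intervalIntegrable _ _
    · exact fun t ht => key t ht
  have hL : (∫ t in (x-2)..x, (g x)^2) = 2 * (g x)^2 := by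
    rw [intervalIntegral.integral_const]
    simp
    try ring
  have hR : (∫ t in (x-2)..x, ((g t)^2 + 2 * D)) = (∫ t in (x-2)..x, (g t)^2) + 2 * (2 * D) := by
    rw [intervalIntegral.integral_add (f := fun t => (g t)^2) (g := fun _ => 2 * D) ((hg.pow 2).intervalIntegrable _ _) intervalIntegrable_const,
      intervalIntegral.integral_const]
    simp
    try ring
  -- shift the integrals to [-1,1] using periodicity
  have hshift1 : (∫ t in (x-2)..x, (g t)^2) = ∫ t in (-1:ℝ)..1, (g t)^2 := by
    have hp2 : Function.Periodic (fun t => (g t)^2) 2 := fun t => by simp [hper t]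
    have := hp2.intervalIntegral_add_eq (x-2) (-1)
    simpa [show x - 2 + 2 = x by ring, show (-1:ℝ) + 2 = 1 by norm_num] using this
  have hshift2 : D = ∫ s in (-1:ℝ)..1, |g s * g' s| := by
    have hp2 : Function.Periodic (fun s => |g s * g' s|) 2 := fun s => by
      simp [hper s, hper' s]
    have := hp2.intervalIntegral_add_eq (x-2) (-1)
    simpa [hD, show x - 2 + 2 = x by ring, show (-1:ℝ) + 2 = 1 by norm_num] using this
  have hcs : (∫ s in (-1:ℝ)..1, |g s * g' s|) ≤
      Real.sqrt (∫ t in (-1:ℝ)..1, (g t)^2) * Real.sqrt (∫ t in (-1:ℝ)..1, (g' t)^2) :=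
    csAbs hg hg' (by norm_num)
  rw [hL, hR, hshift1] at hmono
  rw [hshift2] at hmono
  linarith

lemma integrableOn_sq_cell {g : Pt → ℝ} (hg : Continuous g) :
    IntegrableOn (fun z : Pt => (g z)^2) (Set.Ioo (-1:ℝ) 1 ×ˢ Set.Ioo (-1:ℝ) 1) volume := by
  have hK : IsCompact (Set.Icc (-1:ℝ) 1 ×ˢ Set.Icc (-1:ℝ) 1) := isCompact_Icc.prod isCompact_Icc
  exact ((hg.pow 2).continuousOn.integrableOn_compact hK).mono_set
    (Set.prod_mono Set.Ioo_subset_Icc_self Set.Ioo_subset_Icc_self)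

lemma ioo_int_eq (h : ℝ → ℝ) :
    (∫ t in Set.Ioo (-1:ℝ) 1, h t) = ∫ t in (-1:ℝ)..1, h t := by
  rw [intervalIntegral.integral_of_le (by norm_num : (-1:ℝ) ≤ 1),
    MeasureTheory.integral_Ioc_eq_integral_Ioo]

lemma L2sq_eq {g : Pt → ℝ} (hg : Continuous g) :
    L2sq g = ∫ t in (-1:ℝ)..1, (∫ x in (-1:ℝ)..1, (g (x,t))^2) := by
  have hint := integrableOn_sq_cell hg
  have h1 : L2sq g = ∫ z in Set.Ioo (-1:ℝ) 1 ×ˢ Set.Ioo (-1:ℝ) 1, (g z)^2 := rfl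
  rw [h1]
  rw [show (volume : Measure Pt) = (volume : Measure ℝ).prod (volume : Measure ℝ) from
    (MeasureTheory.Measure.volume_eq_prod ℝ ℝ)]
  rw [MeasureTheory.setIntegral_prod _ (by
    rwa [show (volume : Measure Pt) = (volume : Measure ℝ).prod (volume : Measure ℝ) from
      (MeasureTheory.Measure.volume_eq_prod ℝ ℝ)] at hint)]
  have hswap : (∫ x in Set.Ioo (-1:ℝ) 1, ∫ t in Set.Ioo (-1:ℝ) 1, (g (x,t))^2)
      = ∫ t in Set.Ioo (-1:ℝ) 1, ∫ x in Set.Ioo (-1:ℝ) 1, (g (x,t))^2 := by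
    apply MeasureTheory.integral_integral_swap
    rw [MeasureTheory.Measure.prod_restrict]
    rwa [show (volume : Measure Pt) = (volume : Measure ℝ).prod (volume : Measure ℝ) from
      (MeasureTheory.Measure.volume_eq_prod ℝ ℝ)] at hint
  rw [hswap]
  rw [show (fun t => ∫ x in Set.Ioo (-1:ℝ) 1, (g (x,t))^2)
      = (fun t => ∫ x in (-1:ℝ)..1, (g (x,t))^2) from funext fun t => ioo_int_eq _]
  exact ioo_int_eq _

lemma contInner {g : Pt → ℝ} (hg : Continuous g) :
    Continuous (fun t => ∫ x in (-1:ℝ)..1, (g (x,t))^2) := by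
  apply intervalIntegral.continuous_parametric_intervalIntegral_of_continuous'
    (f := fun t x => (g (x,t))^2)
  have : Continuous fun p : ℝ × ℝ => (g (p.2, p.1))^2 := by fun_prop
  exact this

lemma innerNonneg (g : Pt → ℝ) (t : ℝ) : 0 ≤ ∫ x in (-1:ℝ)..1, (g (x,t))^2 :=
  intervalIntegral.integral_nonneg (by norm_num) (fun x _ => sq_nonneg _)

lemma L2sq_nonneg (g : Pt → ℝ) : 0 ≤ L2sq g :=
  MeasureTheory.setIntegral_nonneg (by
    exact (measurableSet_Ioo.prod measurableSet_Ioo)) (fun z _ => sq_nonneg _)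

lemma sliceAgmon {h : Pt → ℝ} (hh : ContDiff ℝ (⊤:ℕ∞) h) (hper : Periodic2 h) (x t : ℝ) :
    (h (x,t))^2 ≤ (1/2) * (∫ s in (-1:ℝ)..1, (h (s,t))^2)
      + 2 * (Real.sqrt (∫ s in (-1:ℝ)..1, (h (s,t))^2) *
             Real.sqrt (∫ s in (-1:ℝ)..1, (p1 h (s,t))^2)) := by
  have hc : Continuous h := hh.continuous
  have hc' : Continuous (p1 h) := (contDiff_p1 hh).continuous
  exact agmon1d (hc.comp (by fun_prop)) (hc'.comp (by fun_prop))
    (fun s => sliceDeriv1 hh t s) (fun s => hper.1 (s,t)) x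

lemma le_pairN_left (h g : Pt → ℝ) : L2 h ≤ pairN h g := by
  unfold L2 pairN
  exact Real.sqrt_le_sqrt (by linarith [L2sq_nonneg g])

lemma le_pairN_right (h g : Pt → ℝ) : Real.sqrt (L2sq g) ≤ pairN h g := by
  unfold pairN
  exact Real.sqrt_le_sqrt (by linarith [L2sq_nonneg h])

lemma intSliceAgmon {h : Pt → ℝ} (hh : ContDiff ℝ (⊤:ℕ∞) h) (hper : Periodic2 h) (x : ℝ) :
    (∫ t in (-1:ℝ)..1, (h (x,t))^2) ≤ (5/2) * (L2 h * pairN h (p1 h)) := by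
  have hc : Continuous h := hh.continuous
  have hc' : Continuous (p1 h) := (contDiff_p1 hh).continuous
  set u : ℝ → ℝ := fun t => ∫ s in (-1:ℝ)..1, (h (s,t))^2 with hu
  set v : ℝ → ℝ := fun t => ∫ s in (-1:ℝ)..1, (p1 h (s,t))^2 with hv
  have hucont : Continuous u := contInner hc
  have hvcont : Continuous v := contInner hc'
  have hu0 : ∀ t, 0 ≤ u t := innerNonneg h
  have hv0 : ∀ t, 0 ≤ v t := innerNonneg (p1 h)
  have hpt : ∀ t, (h (x,t))^2 ≤ (1/2) * u t + 2 * (Real.sqrt (u t) * Real.sqrt (v t)) :=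
    fun t => sliceAgmon hh hper x t
  have hmono : (∫ t in (-1:ℝ)..1, (h (x,t))^2)
      ≤ ∫ t in (-1:ℝ)..1, ((1/2) * u t + 2 * (Real.sqrt (u t) * Real.sqrt (v t))) := by
    apply intervalIntegral.integral_mono_on (by norm_num)
    · exact ((hc.comp (by fun_prop : Continuous fun t : ℝ => ((x,t) : Pt))).pow 2).intervalIntegrable _ _
    · apply Continuous.intervalIntegrable
      continuity
    · exact fun t _ => hpt t
  have hsplit : (∫ t in (-1:ℝ)..1, ((1/2) * u t + 2 * (Real.sqrt (u t) * Real.sqrt (v t))))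
      = (1/2) * (∫ t in (-1:ℝ)..1, u t)
        + 2 * ∫ t in (-1:ℝ)..1, Real.sqrt (u t) * Real.sqrt (v t) := by
    rw [intervalIntegral.integral_add (f := fun t => (1/2) * u t)
        (g := fun t => 2 * (Real.sqrt (u t) * Real.sqrt (v t)))
        ((continuous_const.mul hucont).intervalIntegrable _ _)
        ((continuous_const.mul ((hucont.sqrt).mul (hvcont.sqrt))).intervalIntegrable _ _),
      intervalIntegral.integral_const_mul, intervalIntegral.integral_const_mul]
  have hcs : (∫ t in (-1:ℝ)..1, Real.sqrt (u t) * Real.sqrt (v t))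
      ≤ Real.sqrt (∫ t in (-1:ℝ)..1, u t) * Real.sqrt (∫ t in (-1:ℝ)..1, v t) :=
    csSqrt hucont hvcont hu0 hv0 (by norm_num)
  have hUL : (∫ t in (-1:ℝ)..1, u t) = L2sq h := (L2sq_eq hc).symm
  have hVL : (∫ t in (-1:ℝ)..1, v t) = L2sq (p1 h) := (L2sq_eq hc').symm
  have ha : Real.sqrt (L2sq h) = L2 h := rfl
  have haA : L2 h ≤ pairN h (p1 h) := le_pairN_left _ _
  have hvA : Real.sqrt (L2sq (p1 h)) ≤ pairN h (p1 h) := le_pairN_right _ _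
  have ha0 : 0 ≤ L2 h := Real.sqrt_nonneg _
  have hL2 : L2sq h = (L2 h) * (L2 h) := (Real.mul_self_sqrt (L2sq_nonneg h)).symm
  calc (∫ t in (-1:ℝ)..1, (h (x,t))^2)
      ≤ (1/2) * (∫ t in (-1:ℝ)..1, u t)
        + 2 * ∫ t in (-1:ℝ)..1, Real.sqrt (u t) * Real.sqrt (v t) := by
        rw [← hsplit]; exact hmono
    _ ≤ (1/2) * L2sq h + 2 * (L2 h * Real.sqrt (L2sq (p1 h))) := by
        rw [hUL]
        have := hcs
        rw [hUL, hVL, ha] at this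
        nlinarith [this]
    _ ≤ (5/2) * (L2 h * pairN h (p1 h)) := by
        have h1 : L2sq h ≤ L2 h * pairN h (p1 h) := by
          rw [hL2]; exact mul_le_mul_of_nonneg_left haA ha0
        have h2 : L2 h * Real.sqrt (L2sq (p1 h)) ≤ L2 h * pairN h (p1 h) :=
          mul_le_mul_of_nonneg_left hvA ha0
        linarith

lemma mainEst {f : Pt → ℝ} (hf : ContDiff ℝ (⊤:ℕ∞) f) (hper : Periodic2 f) {N : ℝ} (hN : 1 ≤ N)
    (x₀ y₀ : ℝ) :
    (f (x₀,y₀))^2 ≤ (5*N/2) * (L2 f * pairN f (p1 f))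
      + (10/N) * (L2 (p2 f) * pairN (p2 f) (p2 (p1 f))) := by
  have hN0 : 0 < N := lt_of_lt_of_le one_pos hN
  set w : ℝ := 2/N with hw
  have hw0 : 0 < w := by positivity
  have hw2 : w ≤ 2 := by rw [hw, div_le_iff₀ hN0]; linarith
  have hcf : Continuous f := hf.continuous
  have hcy : Continuous (p2 f) := (contDiff_p2 hf).continuous
  have hfy : ContDiff ℝ (⊤:ℕ∞) (p2 f) := contDiff_p2 hf
  have hpery : Periodic2 (p2 f) := periodic2_p2 hf hper
  set aA : ℝ := L2 f * pairN f (p1 f) with haA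
  set bB : ℝ := L2 (p2 f) * pairN (p2 f) (p2 (p1 f)) with hbB
  have haA0 : 0 ≤ aA := mul_nonneg (Real.sqrt_nonneg _) (Real.sqrt_nonneg _)
  have hbB0 : 0 ≤ bB := mul_nonneg (Real.sqrt_nonneg _) (Real.sqrt_nonneg _)
  have hIfy : (∫ t in (-1:ℝ)..1, (p2 f (x₀,t))^2) ≤ (5/2) * bB := by
    have := intSliceAgmon hfy hpery x₀
    rwa [p1_p2_comm hf] at this
  have hIf : (∫ t in (-1:ℝ)..1, (f (x₀,t))^2) ≤ (5/2) * aA := intSliceAgmon hf hper x₀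
  -- continuity of slices
  have hslice : Continuous fun t : ℝ => f (x₀,t) := hcf.comp (by fun_prop)
  have hslicey : Continuous fun t : ℝ => p2 f (x₀,t) := hcy.comp (by fun_prop)
  set m : ℝ := (N/2) * ∫ t in y₀..(y₀+w), f (x₀,t) with hm
  set J : ℝ := ∫ s in y₀..(y₀+w), |p2 f (x₀,s)| with hJ
  have hJ0 : 0 ≤ J := intervalIntegral.integral_nonneg (by linarith) (fun s _ => abs_nonneg _)
  -- the y-slice square integral over a period
  set X : ℝ := ∫ s in (-1:ℝ)..1, (p2 f (x₀,s))^2 with hX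
  have hX0 : 0 ≤ X := intervalIntegral.integral_nonneg (by norm_num) (fun s _ => sq_nonneg _)
  -- J ≤ √w √X
  have hJle : J ≤ Real.sqrt w * Real.sqrt X := by
    have hcs := csAbs hslicey continuous_const (le_of_lt (by linarith : y₀ < y₀ + w))
      (q := fun _ => (1:ℝ))
    have e1 : (∫ s in y₀..(y₀+w), |p2 f (x₀,s) * 1|) = J := by simp [hJ]
    have e2 : (∫ s in y₀..(y₀+w), ((1:ℝ))^2) = w := by
      rw [intervalIntegral.integral_const]; simp
    have hext : (∫ s in y₀..(y₀+w), (p2 f (x₀,s))^2) ≤ ∫ s in y₀..(y₀+2), (p2 f (x₀,s))^2 := by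
      apply intervalIntegral.integral_mono_interval le_rfl (by linarith) (by linarith)
      · filter_upwards with s; positivity
      · exact (hslicey.pow 2).intervalIntegrable _ _
    have hshift : (∫ s in y₀..(y₀+2), (p2 f (x₀,s))^2) = X := by
      have hp : Function.Periodic (fun s => (p2 f (x₀,s))^2) 2 := fun s => by
        simp [hpery.2 (x₀,s)]
      have := hp.intervalIntegral_add_eq y₀ (-1)
      simpa [hX, show (-1:ℝ) + 2 = 1 by norm_num] using this
    calc J = ∫ s in y₀..(y₀+w), |p2 f (x₀,s) * 1| := e1.symm
      _ ≤ Real.sqrt (∫ s in y₀..(y₀+w), (p2 f (x₀,s))^2)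
          * Real.sqrt (∫ s in y₀..(y₀+w), ((1:ℝ))^2) := hcs
      _ ≤ Real.sqrt X * Real.sqrt w := by
          rw [e2]
          gcongr
          exact hext.trans (le_of_eq hshift)
      _ = Real.sqrt w * Real.sqrt X := by ring
  -- bound on |f - m|
  have hfm : |f (x₀,y₀) - m| ≤ J := by
    have hptw : ∀ t ∈ Set.Icc y₀ (y₀+w), |f (x₀,y₀) - f (x₀,t)| ≤ J := by
      intro t ht
      have hftc : (∫ s in y₀..t, p2 f (x₀,s)) = f (x₀,t) - f (x₀,y₀) := by
        apply intervalIntegral.integral_eq_sub_of_hasDerivAt (fun s _ => sliceDeriv2 hf x₀ s)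
        exact hslicey.intervalIntegrable _ _
      have : |f (x₀,t) - f (x₀,y₀)| ≤ J := by
        rw [← hftc]
        calc |∫ s in y₀..t, p2 f (x₀,s)| ≤ ∫ s in y₀..t, |p2 f (x₀,s)| :=
            intervalIntegral.abs_integral_le_integral_abs ht.1
          _ ≤ J := by
            apply intervalIntegral.integral_mono_interval le_rfl ht.1 ht.2
            · filter_upwards with s; positivity
            · exact (hslicey.abs).intervalIntegrable _ _
      rwa [abs_sub_comm]
    have heq : f (x₀,y₀) - m = (N/2) * ∫ t in y₀..(y₀+w), (f (x₀,y₀) - f (x₀,t)) := by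
      rw [intervalIntegral.integral_sub intervalIntegrable_const
        (hslice.intervalIntegrable _ _), intervalIntegral.integral_const, hm]
      have : (y₀ + w - y₀) • f (x₀,y₀) = w * f (x₀,y₀) := by
        simp [smul_eq_mul]
      rw [this]
      have hNw : (N/2) * w = 1 := by
        rw [hw]; field_simp
      rw [mul_sub, ← mul_assoc, hNw, one_mul]
    rw [heq, abs_mul, abs_of_pos (by positivity : (0:ℝ) < N/2)]
    have habs : |∫ t in y₀..(y₀+w), (f (x₀,y₀) - f (x₀,t))|
        ≤ ∫ t in y₀..(y₀+w), |f (x₀,y₀) - f (x₀,t)| :=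
      intervalIntegral.abs_integral_le_integral_abs (by linarith)
    have hintmono : (∫ t in y₀..(y₀+w), |f (x₀,y₀) - f (x₀,t)|) ≤ ∫ t in y₀..(y₀+w), J := by
      apply intervalIntegral.integral_mono_on (by linarith)
      · exact ((continuous_const.sub hslice).abs).intervalIntegrable _ _
      · exact intervalIntegrable_const
      · exact hptw
    have hconst : (∫ t in y₀..(y₀+w), J) = w * J := by
      rw [intervalIntegral.integral_const]; simp [smul_eq_mul]
    have hNw : (N/2) * w = 1 := by rw [hw]; field_simp
    calc (N/2) * |∫ t in y₀..(y₀+w), (f (x₀,y₀) - f (x₀,t))|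
        ≤ (N/2) * (w * J) := by
          apply mul_le_mul_of_nonneg_left _ (by positivity)
          exact habs.trans (hintmono.trans_eq hconst)
      _ = J := by rw [← mul_assoc, hNw, one_mul]
  -- combine
  have hhigh : (f (x₀,y₀) - m)^2 ≤ (5/N) * bB := by
    have h1 : (f (x₀,y₀) - m)^2 ≤ J^2 := by
      rw [← sq_abs (f (x₀,y₀) - m)]
      exact pow_le_pow_left₀ (abs_nonneg _) hfm 2
    have h2 : J^2 ≤ w * X := by
      calc J^2 ≤ (Real.sqrt w * Real.sqrt X)^2 := pow_le_pow_left₀ hJ0 hJle 2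
        _ = w * X := by
          rw [mul_pow, Real.sq_sqrt hw0.le, Real.sq_sqrt hX0]
    have h3 : w * X ≤ w * ((5/2) * bB) :=
      mul_le_mul_of_nonneg_left hIfy hw0.le
    have : w * ((5/2)*bB) = (5/N) * bB := by rw [hw]; field_simp
    linarith
  have hlow : m^2 ≤ (5*N/4) * aA := by
    have hKcs := csAbs hslice continuous_const (le_of_lt (by linarith : y₀ < y₀ + w))
      (q := fun _ => (1:ℝ))
    have e1 : (∫ t in y₀..(y₀+w), |f (x₀,t) * 1|) = ∫ t in y₀..(y₀+w), |f (x₀,t)| := by simp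
    have e2 : (∫ t in y₀..(y₀+w), ((1:ℝ))^2) = w := by
      rw [intervalIntegral.integral_const]; simp
    set Y : ℝ := ∫ t in (-1:ℝ)..1, (f (x₀,t))^2 with hY
    have hY0 : 0 ≤ Y := intervalIntegral.integral_nonneg (by norm_num) (fun s _ => sq_nonneg _)
    have hext : (∫ t in y₀..(y₀+w), (f (x₀,t))^2) ≤ ∫ t in y₀..(y₀+2), (f (x₀,t))^2 := by
      apply intervalIntegral.integral_mono_interval le_rfl (by linarith) (by linarith)
      · filter_upwards with s; positivity
      · exact (hslice.pow 2).intervalIntegrable _ _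
    have hshift : (∫ t in y₀..(y₀+2), (f (x₀,t))^2) = Y := by
      have hp : Function.Periodic (fun t => (f (x₀,t))^2) 2 := fun t => by
        simp [hper.2 (x₀,t)]
      have := hp.intervalIntegral_add_eq y₀ (-1)
      simpa [hY, show (-1:ℝ) + 2 = 1 by norm_num] using this
    have hmabs : |m| ≤ (N/2) * ∫ t in y₀..(y₀+w), |f (x₀,t)| := by
      rw [hm, abs_mul, abs_of_pos (by positivity : (0:ℝ) < N/2)]
      exact mul_le_mul_of_nonneg_left
        (intervalIntegral.abs_integral_le_integral_abs (by linarith)) (by positivity)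
    have hK : (∫ t in y₀..(y₀+w), |f (x₀,t)|)
        ≤ Real.sqrt w * Real.sqrt Y := by
      calc (∫ t in y₀..(y₀+w), |f (x₀,t)|) = ∫ t in y₀..(y₀+w), |f (x₀,t) * 1| := e1.symm
        _ ≤ Real.sqrt (∫ t in y₀..(y₀+w), (f (x₀,t))^2)
            * Real.sqrt (∫ t in y₀..(y₀+w), ((1:ℝ))^2) := hKcs
        _ ≤ Real.sqrt Y * Real.sqrt w := by
            rw [e2]
            gcongr
            exact hext.trans (le_of_eq hshift)
        _ = Real.sqrt w * Real.sqrt Y := by ring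
    have hm2 : m^2 ≤ (N/2)^2 * (w * Y) := by
      have h1 : m^2 ≤ ((N/2) * (Real.sqrt w * Real.sqrt Y))^2 := by
        rw [← sq_abs m]
        apply pow_le_pow_left₀ (abs_nonneg _)
        exact hmabs.trans (mul_le_mul_of_nonneg_left hK (by positivity))
      calc m^2 ≤ ((N/2) * (Real.sqrt w * Real.sqrt Y))^2 := h1
        _ = (N/2)^2 * (w * Y) := by
          rw [mul_pow, mul_pow, Real.sq_sqrt hw0.le, Real.sq_sqrt hY0]
    have hY5 : Y ≤ (5/2) * aA := hIf
    have e3 : (N/2)^2 * w = N/2 := by rw [hw]; field_simp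
    calc m^2 ≤ (N/2)^2 * (w * Y) := hm2
      _ = ((N/2)^2 * w) * Y := by ring
      _ = (N/2) * Y := by rw [e3]
      _ ≤ (N/2) * ((5/2) * aA) := mul_le_mul_of_nonneg_left hY5 (by positivity)
      _ = (5*N/4) * aA := by ring
  have hsq : (f (x₀,y₀))^2 ≤ 2 * m^2 + 2 * (f (x₀,y₀) - m)^2 := by
    nlinarith [sq_nonneg (m - (f (x₀,y₀) - m))]
  calc (f (x₀,y₀))^2 ≤ 2 * m^2 + 2 * (f (x₀,y₀) - m)^2 := hsq
    _ ≤ 2 * ((5*N/4) * aA) + 2 * ((5/N) * bB) := by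
        have := hlow; have := hhigh
        nlinarith [hlow, hhigh]
    _ = (5*N/2) * aA + (10/N) * bB := by field_simp; ring

lemma zero_on_cell {f : Pt → ℝ} (hc : Continuous f) (h0 : L2sq f = 0) :
    ∀ y ∈ cell, f y = 0 := by
  have hint : IntegrableOn (fun z : Pt => (f z)^2) cell volume := integrableOn_sq_cell hc
  have hiff := MeasureTheory.integral_eq_zero_iff_of_nonneg
    (f := fun z : Pt => (f z)^2) (μ := volume.restrict cell) (fun z => sq_nonneg _) hint
  have hae : (fun z : Pt => (f z)^2) =ᵐ[volume.restrict cell] 0 := hiff.mp h0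
  have hopen : IsOpen cell := (isOpen_Ioo).prod (isOpen_Ioo)
  have hsub : cell ⊆ closure (interior cell) := by
    rw [hopen.interior_eq]; exact subset_closure
  have heq : Set.EqOn (fun z : Pt => (f z)^2) 0 cell :=
    MeasureTheory.Measure.eqOn_of_ae_eq hae ((hc.pow 2).continuousOn) continuousOn_const hsub
  intro y hy
  have := heq hy
  simpa using pow_eq_zero_iff (n := 2) (by norm_num) |>.mp (by simpa using this)

/-- interpolation inequality: there is a universal constant `c₀ > 0`
such that every smooth 2-periodic function `f` satisfies, on the periodic cell,
`‖f‖_{L^∞}² ≤ c₀ (‖f‖₀‖(f,∂₁f)‖₀ + ‖f‖₀^{1/2}‖(f,∂₁f)‖₀^{1/2}‖∂₂f‖₀^{1/2}‖∂₂(f,∂₁f)‖₀^{1/2})`. -/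
theorem statement2 :
    ∃ c₀ : ℝ, 0 < c₀ ∧
      ∀ f : Pt → ℝ, ContDiff ℝ (⊤ : ℕ∞) f → Periodic2 f →
        ∀ y ∈ cell, (f y) ^ 2 ≤
          c₀ * (L2 f * pairN f (p1 f) +
            Real.sqrt (L2 f) * Real.sqrt (pairN f (p1 f)) *
              Real.sqrt (L2 (p2 f)) * Real.sqrt (pairN (p2 f) (p2 (p1 f)))) := by
  refine ⟨13, by norm_num, ?_⟩
  intro f hf hper y hy
  set a : ℝ := L2 f with ha
  set A : ℝ := pairN f (p1 f) with hA
  set b : ℝ := L2 (p2 f) with hb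
  set B : ℝ := pairN (p2 f) (p2 (p1 f)) with hB
  have ha0 : 0 ≤ a := Real.sqrt_nonneg _
  have hA0 : 0 ≤ A := Real.sqrt_nonneg _
  have hb0 : 0 ≤ b := Real.sqrt_nonneg _
  have hB0 : 0 ≤ B := Real.sqrt_nonneg _
  set T : ℝ := a * A with hT
  set S : ℝ := b * B with hS
  have hT0 : 0 ≤ T := mul_nonneg ha0 hA0
  have hS0 : 0 ≤ S := mul_nonneg hb0 hB0
  have hprod : Real.sqrt a * Real.sqrt A * Real.sqrt b * Real.sqrt B = Real.sqrt (T * S) := by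
    calc Real.sqrt a * Real.sqrt A * Real.sqrt b * Real.sqrt B
        = (Real.sqrt a * Real.sqrt A) * (Real.sqrt b * Real.sqrt B) := by ring
      _ = Real.sqrt (a * A) * Real.sqrt (b * B) := by
          rw [← Real.sqrt_mul ha0, ← Real.sqrt_mul hb0]
      _ = Real.sqrt (T * S) := (Real.sqrt_mul hT0 _).symm
  rw [hprod]
  have hsT0 : 0 ≤ Real.sqrt (T * S) := Real.sqrt_nonneg _
  have key : ∀ N : ℝ, 1 ≤ N → (f y)^2 ≤ (5*N/2) * T + (10/N) * S := by
    intro N hN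
    have := mainEst hf hper hN y.1 y.2
    simpa using this
  rcases eq_or_lt_of_le hT0 with hTz | hTpos
  · -- degenerate case : T = 0, so ‖f‖ = 0 and f = 0 on the cell
    have haz : a = 0 := by
      rcases mul_eq_zero.mp hTz.symm with h | h
      · exact h
      · have : a ≤ A := le_pairN_left f (p1 f)
        linarith
    have hL2z : L2sq f = 0 := by
      have : Real.sqrt (L2sq f) = 0 := haz
      rwa [Real.sqrt_eq_zero (L2sq_nonneg f)] at this
    have hfz : f y = 0 := zero_on_cell hf.continuous hL2z y hy
    rw [hfz]
    have : (0:ℝ)^2 = 0 := by norm_num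
    rw [this]
    positivity
  · rcases le_or_gt S T with hST | hTS
    · have h1 := key 1 le_rfl
      have h2 : S ≤ Real.sqrt (T * S) := by
        have : S = Real.sqrt (S * S) := (Real.sqrt_mul_self hS0).symm
        rw [this]
        exact Real.sqrt_le_sqrt (by nlinarith)
      have h3 : (5*(1:ℝ)/2) * T + (10/1) * S = (5/2)*T + 10*S := by norm_num
      rw [h3] at h1
      linarith
    · set N : ℝ := Real.sqrt (S / T) with hNdef
      have hSTpos : 1 ≤ S / T := by
        rw [le_div_iff₀ hTpos]; linarith
      have hN : 1 ≤ N := by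
        rw [hNdef, show (1:ℝ) = Real.sqrt 1 by simp]
        exact Real.sqrt_le_sqrt (by simpa using hSTpos)
      have hNpos : 0 < N := lt_of_lt_of_le one_pos hN
      have hSpos : 0 < S := lt_of_le_of_lt hT0 hTS
      have hNsq : N^2 = S / T := Real.sq_sqrt (by positivity)
      have e1 : N * T = Real.sqrt (T * S) := by
        rw [← Real.sqrt_sq (by positivity : (0:ℝ) ≤ N * T)]
        congr 1
        rw [mul_pow, hNsq]
        field_simp
      have e2 : S / N = Real.sqrt (T * S) := by
        rw [← Real.sqrt_sq (by positivity : (0:ℝ) ≤ S / N)]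
        congr 1
        rw [div_pow, hNsq, div_div_eq_mul_div, div_eq_iff hSpos.ne']
        ring
      have hk := key N hN
      have e3 : (5*N/2) * T = (5/2) * Real.sqrt (T * S) := by
        rw [← e1]; ring
      have e4 : (10/N) * S = 10 * Real.sqrt (T * S) := by
        rw [← e2]; ring
      rw [e3, e4] at hk
      linarith
end
end

section
/- There is a universal constant c₀ > 0 such that for all smooth functions f, g, h : ℝ² → ℝ which are 2-periodic in each variable, one has ∫_{(-1,1)²} |f g h| dy ≤ c₀ (‖f‖₀ ‖f‖_{1,2})^{1/2} ‖(g,∂₁g)‖₀ ‖h‖₀, and consequently ∫_{(-1,1)²} |f g h| dy ≤ c₀ ‖(f,∂₂f)‖₀ ‖(g,∂₁g)‖₀ ‖h‖₀. -/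
open MeasureTheory

noncomputable section

/-! ### Auxiliary lemmas -/

/-- Cauchy–Schwarz for integrals. -/
lemma my_cs {α : Type*} [MeasurableSpace α] (μ : Measure α) (φ ψ : α → ℝ)
    (hφ : Integrable (fun z => φ z ^ 2) μ) (hψ : Integrable (fun z => ψ z ^ 2) μ)
    (hm : Integrable (fun z => φ z * ψ z) μ) :
    ∫ z, φ z * ψ z ∂μ ≤ Real.sqrt (∫ z, φ z ^ 2 ∂μ) * Real.sqrt (∫ z, ψ z ^ 2 ∂μ) := by
  set a := Real.sqrt (∫ z, φ z ^ 2 ∂μ) with ha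
  set b := Real.sqrt (∫ z, ψ z ^ 2 ∂μ) with hb
  have ha0 : 0 ≤ a := Real.sqrt_nonneg _
  have hb0 : 0 ≤ b := Real.sqrt_nonneg _
  have haa : ∫ z, φ z ^ 2 ∂μ = a ^ 2 :=
    (Real.sq_sqrt (integral_nonneg fun z => sq_nonneg _)).symm
  have hbb : ∫ z, ψ z ^ 2 ∂μ = b ^ 2 :=
    (Real.sq_sqrt (integral_nonneg fun z => sq_nonneg _)).symm
  have key : ∀ t : ℝ, 0 < t →
      ∫ z, φ z * ψ z ∂μ ≤ t / 2 * a ^ 2 + 1 / (2 * t) * b ^ 2 := by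
    intro t ht
    have h1 : ∫ z, φ z * ψ z ∂μ ≤
        ∫ z, (t / 2 * φ z ^ 2 + 1 / (2 * t) * ψ z ^ 2) ∂μ := by
      refine integral_mono hm ((hφ.const_mul _).add (hψ.const_mul _)) fun z => ?_
      have h2 : t / 2 * φ z ^ 2 + 1 / (2 * t) * ψ z ^ 2 - φ z * ψ z
          = (t * φ z - ψ z) ^ 2 / (2 * t) := by
        field_simp
        ring
      have h3 : (0:ℝ) ≤ (t * φ z - ψ z) ^ 2 / (2 * t) := by positivity
      simp only [Pi.add_apply]
      linarith [h2 ▸ h3]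
    rw [integral_add (hφ.const_mul _) (hψ.const_mul _), integral_const_mul,
      integral_const_mul, haa, hbb] at h1
    exact h1
  have key2 : ∀ ε : ℝ, 0 < ε → ∫ z, φ z * ψ z ∂μ ≤ (a + ε) * (b + ε) := by
    intro ε hε
    have hA : 0 < a + ε := by linarith
    have hB : 0 < b + ε := by linarith
    have ht : 0 < (b + ε) / (a + ε) := div_pos hB hA
    refine (key _ ht).trans ?_
    have h2 : a ^ 2 ≤ (a + ε) ^ 2 := by nlinarith
    have h3 : b ^ 2 ≤ (b + ε) ^ 2 := by nlinarith
    have e1 : (b + ε) / (a + ε) / 2 * a ^ 2 ≤ (a + ε) * (b + ε) / 2 := by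
      rw [div_div, div_mul_eq_mul_div, div_le_div_iff₀ (by positivity) (by norm_num)]
      nlinarith
    have e2 : 1 / (2 * ((b + ε) / (a + ε))) * b ^ 2 ≤ (a + ε) * (b + ε) / 2 := by
      rw [one_div, mul_comm, ← div_eq_mul_inv]
      have e2' : b ^ 2 / (2 * ((b + ε) / (a + ε))) = b ^ 2 * (a + ε) / (2 * (b + ε)) := by
        field_simp
      rw [e2', div_le_div_iff₀ (by positivity) (by norm_num)]
      nlinarith
    linarith
  refine le_of_forall_pos_le_add fun δ hδ => ?_
  have hd : 0 < a + b + 1 := by linarith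
  set ε := min 1 (δ / (a + b + 1)) with hε
  have hε0 : 0 < ε := lt_min one_pos (div_pos hδ hd)
  have hε1 : ε ≤ 1 := min_le_left _ _
  have hε2 : ε ≤ δ / (a + b + 1) := min_le_right _ _
  have h4 : ε * (a + b + 1) ≤ δ := by
    rw [← le_div_iff₀ hd]; exact hε2
  have := key2 ε hε0
  nlinarith

lemma integrableOn_Ioo_of_cont {v : ℝ → ℝ} (hv : Continuous v) :
    IntegrableOn v (Set.Ioo (-1:ℝ) 1) :=
  (hv.continuousOn.integrableOn_compact isCompact_Icc).mono_set Set.Ioo_subset_Icc_self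

/-- 1D Agmon-type pointwise bound. -/
lemma oneD {u u' : ℝ → ℝ} (hu : Continuous u) (hu' : Continuous u')
    (hd : ∀ t, HasDerivAt u (u' t) t) {x : ℝ} (hx : x ∈ Set.Icc (-1:ℝ) 1) :
    u x ^ 2 ≤ ∫ t in Set.Ioo (-1:ℝ) 1, ((1:ℝ)/2 * u t ^ 2 + 2 * |u t * u' t|) := by
  have hc2 : Continuous fun t => 2 * u t * u' t := (continuous_const.mul hu).mul hu'
  have habs : Continuous fun t => |2 * u t * u' t| := hc2.abs
  have hsq : Continuous fun t => u t ^ 2 := hu.pow 2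
  have hig : Continuous fun t => (1:ℝ)/2 * u t ^ 2 + 2 * |u t * u' t| :=
    (continuous_const.mul hsq).add (continuous_const.mul (hu.mul hu').abs)
  set D := ∫ t in Set.Ioo (-1:ℝ) 1, |2 * u t * u' t| with hD
  have hD0 : 0 ≤ D := setIntegral_nonneg measurableSet_Ioo fun t _ => abs_nonneg _
  have key : ∀ y ∈ Set.Ioo (-1:ℝ) 1, u x ^ 2 ≤ u y ^ 2 + D := by
    intro y hy
    have ftc : ∫ t in y..x, 2 * u t * u' t = u x ^ 2 - u y ^ 2 := by
      refine intervalIntegral.integral_eq_sub_of_hasDerivAt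
        (f := fun s => u s ^ 2) (f' := fun t => 2 * u t * u' t) (fun t _ => ?_)
        (hc2.intervalIntegrable _ _)
      simpa [mul_assoc, mul_comm, mul_left_comm] using (hd t).fun_pow 2
    have h1 : u x ^ 2 - u y ^ 2 ≤ |∫ t in y..x, 2 * u t * u' t| := ftc ▸ le_abs_self _
    have h2 : |∫ t in y..x, 2 * u t * u' t| ≤ ∫ t in Set.uIoc y x, |2 * u t * u' t| := by
      simpa only [Real.norm_eq_abs] using
        intervalIntegral.norm_integral_le_integral_norm_uIoc
          (f := fun t => 2 * u t * u' t) (a := y) (b := x) (μ := volume)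
    have hsub : Set.uIoc y x ⊆ Set.Icc (-1:ℝ) 1 := by
      rw [Set.uIoc]
      refine Set.Ioc_subset_Icc_self.trans (Set.Icc_subset_Icc ?_ ?_)
      · exact le_min hy.1.le hx.1
      · exact max_le hy.2.le hx.2
    have h3 : ∫ t in Set.uIoc y x, |2 * u t * u' t| ≤ D := by
      refine setIntegral_mono_set (integrableOn_Ioo_of_cont habs)
        (ae_of_all _ fun t => abs_nonneg _) ?_
      refine (HasSubset.Subset.eventuallyLE hsub).trans ?_
      exact Filter.EventuallyEq.le (MeasureTheory.Ioo_ae_eq_Icc).symm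
    linarith
  have hint1 : IntegrableOn (fun y => u y ^ 2 + D) (Set.Ioo (-1:ℝ) 1) :=
    (integrableOn_Ioo_of_cont hsq).add (integrableOn_const (by
      rw [Real.volume_Ioo]; exact ENNReal.ofReal_ne_top))
  have hmono : ∫ _ in Set.Ioo (-1:ℝ) 1, u x ^ 2 ≤
      ∫ y in Set.Ioo (-1:ℝ) 1, (u y ^ 2 + D) := by
    refine setIntegral_mono_on (integrableOn_const (by
      rw [Real.volume_Ioo]; exact ENNReal.ofReal_ne_top)) hint1 measurableSet_Ioo key
  have hvol : (volume (Set.Ioo (-1:ℝ) 1)).toReal = 2 := by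
    rw [Real.volume_Ioo]; norm_num
  rw [setIntegral_const, measureReal_def, hvol, smul_eq_mul] at hmono
  have hsum : ∫ y in Set.Ioo (-1:ℝ) 1, (u y ^ 2 + D) =
      (∫ y in Set.Ioo (-1:ℝ) 1, u y ^ 2) + 2 * D := by
    rw [integral_add (integrableOn_Ioo_of_cont hsq)
      (integrableOn_const (by rw [Real.volume_Ioo]; exact ENNReal.ofReal_ne_top))]
    rw [setIntegral_const, measureReal_def, hvol, smul_eq_mul]
  have hgoal : ∫ t in Set.Ioo (-1:ℝ) 1, ((1:ℝ)/2 * u t ^ 2 + 2 * |u t * u' t|) =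
      (1:ℝ)/2 * (∫ t in Set.Ioo (-1:ℝ) 1, u t ^ 2) + D := by
    rw [integral_add (integrableOn_Ioo_of_cont (continuous_const.fun_mul hsq))
      (integrableOn_Ioo_of_cont (continuous_const.fun_mul (hu.fun_mul hu').abs))]
    rw [integral_const_mul]
    congr 1
    rw [hD]
    refine setIntegral_congr_fun measurableSet_Ioo fun t _ => ?_
    simp [abs_mul, abs_two, mul_assoc]
  rw [hgoal]
  linarith

lemma cont_p2 {f : Pt → ℝ} (hf : ContDiff ℝ (⊤ : ℕ∞) f) : Continuous (p2 f) :=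
  (hf.continuous_fderiv (by simp)).clm_apply continuous_const

lemma cont_p1 {f : Pt → ℝ} (hf : ContDiff ℝ (⊤ : ℕ∞) f) : Continuous (p1 f) :=
  (hf.continuous_fderiv (by simp)).clm_apply continuous_const

lemma hasDeriv_slice2 {f : Pt → ℝ} (hf : ContDiff ℝ (⊤ : ℕ∞) f) (x1 t : ℝ) :
    HasDerivAt (fun s => f (x1, s)) (p2 f (x1, t)) t := by
  have h1 : HasDerivAt (fun s : ℝ => ((x1, s) : Pt)) ((0 : ℝ), (1 : ℝ)) t :=
    (hasDerivAt_const t x1).prodMk (hasDerivAt_id t)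
  exact (((hf.differentiable (by simp)) (x1, t)).hasFDerivAt).comp_hasDerivAt t h1

lemma hasDeriv_slice1 {f : Pt → ℝ} (hf : ContDiff ℝ (⊤ : ℕ∞) f) (x2 t : ℝ) :
    HasDerivAt (fun s => f (s, x2)) (p1 f (t, x2)) t := by
  have h1 : HasDerivAt (fun s : ℝ => ((s, x2) : Pt)) ((1 : ℝ), (0 : ℝ)) t :=
    (hasDerivAt_id t).prodMk (hasDerivAt_const t x2)
  exact (((hf.differentiable (by simp)) (t, x2)).hasFDerivAt).comp_hasDerivAt t h1

def K2 : Set Pt := Set.Icc (-1 : ℝ) 1 ×ˢ Set.Icc (-1 : ℝ) 1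

lemma cell_subset_K2 : cell ⊆ K2 :=
  Set.prod_mono Set.Ioo_subset_Icc_self Set.Ioo_subset_Icc_self

lemma isCompact_K2 : IsCompact K2 := isCompact_Icc.prod isCompact_Icc

lemma measurableSet_cell : MeasurableSet cell :=
  measurableSet_Ioo.prod measurableSet_Ioo

lemma intOn_cell_of_contOn {F : Pt → ℝ} (hF : ContinuousOn F K2) :
    IntegrableOn F cell :=
  (hF.integrableOn_compact isCompact_K2).mono_set cell_subset_K2

lemma intOn_cell {F : Pt → ℝ} (hF : Continuous F) : IntegrableOn F cell :=
  intOn_cell_of_contOn hF.continuousOn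

lemma vol_Ioo_lt_top : volume (Set.Ioo (-1:ℝ) 1) < ⊤ := by
  rw [Real.volume_Ioo]; exact ENNReal.ofReal_lt_top

/-- Continuity of a parametric integral over the second variable. -/
lemma contOn_param {F : Pt → ℝ} (hF : Continuous F) :
    ContinuousOn (fun x => ∫ t in Set.Ioo (-1:ℝ) 1, F (x, t)) (Set.Icc (-1:ℝ) 1) := by
  obtain ⟨C, hC⟩ := isCompact_K2.exists_bound_of_continuousOn hF.continuousOn
  refine continuousOn_of_dominated (bound := fun _ => C)
    (fun x _ => (hF.comp (continuous_const.prodMk continuous_id)).aestronglyMeasurable)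
    (fun x hx => ?_) (integrableOn_const vol_Ioo_lt_top.ne) ?_
  · refine (ae_restrict_iff' measurableSet_Ioo).2 (ae_of_all _ fun t ht => ?_)
    exact hC (x, t) ⟨hx, Set.Ioo_subset_Icc_self ht⟩
  · exact ae_of_all _ fun t =>
      (hF.comp (continuous_id.prodMk continuous_const)).continuousOn

/-- Continuity of a parametric integral over the first variable. -/
lemma contOn_param' {F : Pt → ℝ} (hF : Continuous F) :
    ContinuousOn (fun y => ∫ s in Set.Ioo (-1:ℝ) 1, F (s, y)) (Set.Icc (-1:ℝ) 1) := by
  obtain ⟨C, hC⟩ := isCompact_K2.exists_bound_of_continuousOn hF.continuousOn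
  refine continuousOn_of_dominated (bound := fun _ => C)
    (fun y _ => (hF.comp (continuous_id.prodMk continuous_const)).aestronglyMeasurable)
    (fun y hy => ?_) (integrableOn_const vol_Ioo_lt_top.ne) ?_
  · refine (ae_restrict_iff' measurableSet_Ioo).2 (ae_of_all _ fun s hs => ?_)
    exact hC (s, y) ⟨Set.Ioo_subset_Icc_self hs, hy⟩
  · exact ae_of_all _ fun s =>
      (hF.comp (continuous_const.prodMk continuous_id)).continuousOn

set_option maxHeartbeats 1000000 in
/-- product estimate: there is a universal constant `c₀ > 0` such that
for all smooth 2-periodic functions `f, g, h`,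
`∫ |fgh| ≤ c₀ (‖f‖₀‖f‖_{1,2})^{1/2} ‖(g,∂₁g)‖₀ ‖h‖₀` and consequently
`∫ |fgh| ≤ c₀ ‖(f,∂₂f)‖₀ ‖(g,∂₁g)‖₀ ‖h‖₀`, where `‖f‖_{1,2} = √(‖f‖₀² + ‖∂₂f‖₀²)`. -/
theorem statement4 :
    ∃ c₀ : ℝ, 0 < c₀ ∧
      ∀ f g h : Pt → ℝ,
        ContDiff ℝ (⊤ : ℕ∞) f → ContDiff ℝ (⊤ : ℕ∞) g → ContDiff ℝ (⊤ : ℕ∞) h →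
        Periodic2 f → Periodic2 g → Periodic2 h →
        (∫ y in cell, |f y * g y * h y|) ≤
            c₀ * Real.sqrt (L2 f * pairN f (p2 f)) * pairN g (p1 g) * L2 h ∧
        (∫ y in cell, |f y * g y * h y|) ≤
            c₀ * pairN f (p2 f) * pairN g (p1 g) * L2 h := by
  refine ⟨3, by norm_num, fun f g h hf hg hh _ _ _ => ?_⟩
  -- continuity facts
  have hfc : Continuous f := hf.continuous
  have hgc : Continuous g := hg.continuous
  have hhc : Continuous h := hh.continuous
  have hp2f : Continuous (p2 f) := cont_p2 hf
  have hp1g : Continuous (p1 g) := cont_p1 hg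
  -- the two slice integrands
  set If : Pt → ℝ := fun z => (1:ℝ)/2 * f z ^ 2 + 2 * |f z * p2 f z| with hIf_def
  set Ig : Pt → ℝ := fun z => (1:ℝ)/2 * g z ^ 2 + 2 * |g z * p1 g z| with hIg_def
  have hIfc : Continuous If :=
    (continuous_const.mul (hfc.pow 2)).add (continuous_const.mul (hfc.mul hp2f).abs)
  have hIgc : Continuous Ig :=
    (continuous_const.mul (hgc.pow 2)).add (continuous_const.mul (hgc.mul hp1g).abs)
  set Ff : ℝ → ℝ := fun x => ∫ t in Set.Ioo (-1:ℝ) 1, If (x, t) with hFf_def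
  set Gg : ℝ → ℝ := fun y => ∫ s in Set.Ioo (-1:ℝ) 1, Ig (s, y) with hGg_def
  have hFfc : ContinuousOn Ff (Set.Icc (-1:ℝ) 1) := contOn_param hIfc
  have hGgc : ContinuousOn Gg (Set.Icc (-1:ℝ) 1) := contOn_param' hIgc
  have hFf0 : ∀ x, 0 ≤ Ff x := fun x =>
    setIntegral_nonneg measurableSet_Ioo fun t _ => by positivity
  have hGg0 : ∀ y, 0 ≤ Gg y := fun y =>
    setIntegral_nonneg measurableSet_Ioo fun s _ => by positivity
  -- pointwise slice bounds
  have hfF : ∀ z ∈ cell, f z ^ 2 ≤ Ff z.1 := by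
    rintro ⟨x1, x2⟩ hz
    have hx2 : x2 ∈ Set.Icc (-1:ℝ) 1 := Set.Ioo_subset_Icc_self hz.2
    exact oneD (u := fun t => f (x1, t)) (u' := fun t => p2 f (x1, t))
      (hfc.comp (continuous_const.prodMk continuous_id))
      (hp2f.comp (continuous_const.prodMk continuous_id))
      (hasDeriv_slice2 hf x1) hx2
  have hgG : ∀ z ∈ cell, g z ^ 2 ≤ Gg z.2 := by
    rintro ⟨x1, x2⟩ hz
    have hx1 : x1 ∈ Set.Icc (-1:ℝ) 1 := Set.Ioo_subset_Icc_self hz.1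
    exact oneD (u := fun s => g (s, x2)) (u' := fun s => p1 g (s, x2))
      (hgc.comp (continuous_id.prodMk continuous_const))
      (hp1g.comp (continuous_id.prodMk continuous_const))
      (fun t => hasDeriv_slice1 hg x2 t) hx1
  -- continuity of the product  z ↦ Ff z.1 * Gg z.2  on K2
  have hFGon : ContinuousOn (fun z : Pt => Ff z.1 * Gg z.2) K2 := by
    refine ContinuousOn.mul ?_ ?_
    · exact hFfc.comp continuous_fst.continuousOn fun z hz => hz.1
    · exact hGgc.comp continuous_snd.continuousOn fun z hz => hz.2
  have hsqrtFGon : ContinuousOn (fun z : Pt => Real.sqrt (Ff z.1 * Gg z.2)) K2 :=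
    Real.continuous_sqrt.comp_continuousOn hFGon
  -- step 1 : pointwise domination
  have step1 : (∫ z in cell, |f z * g z * h z|) ≤
      ∫ z in cell, Real.sqrt (Ff z.1 * Gg z.2) * |h z| := by
    refine setIntegral_mono_on (intOn_cell ((hfc.mul hgc).mul hhc).abs)
      (intOn_cell_of_contOn (hsqrtFGon.mul hhc.abs.continuousOn))
      measurableSet_cell fun z hz => ?_
    have h1 : |f z| ≤ Real.sqrt (Ff z.1) := Real.abs_le_sqrt (hfF z hz)
    have h2 : |g z| ≤ Real.sqrt (Gg z.2) := Real.abs_le_sqrt (hgG z hz)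
    calc |f z * g z * h z| = |f z| * |g z| * |h z| := by rw [abs_mul, abs_mul]
      _ ≤ Real.sqrt (Ff z.1) * Real.sqrt (Gg z.2) * |h z| := by
          refine mul_le_mul (mul_le_mul h1 h2 (abs_nonneg _) (Real.sqrt_nonneg _))
            le_rfl (abs_nonneg _) (by positivity)
      _ = Real.sqrt (Ff z.1 * Gg z.2) * |h z| := by rw [Real.sqrt_mul (hFf0 z.1)]
  -- step 2 : Cauchy–Schwarz
  have step2 : (∫ z in cell, Real.sqrt (Ff z.1 * Gg z.2) * |h z|) ≤
      Real.sqrt (∫ z in cell, Ff z.1 * Gg z.2) * Real.sqrt (L2sq h) := by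
    have e1 : ∫ z in cell, (Real.sqrt (Ff z.1 * Gg z.2)) ^ 2 =
        ∫ z in cell, Ff z.1 * Gg z.2 :=
      setIntegral_congr_fun measurableSet_cell fun z _ =>
        Real.sq_sqrt (mul_nonneg (hFf0 _) (hGg0 _))
    have e2 : ∫ z in cell, |h z| ^ 2 = L2sq h :=
      setIntegral_congr_fun measurableSet_cell fun z _ => sq_abs _
    have := my_cs (volume.restrict cell)
      (fun z => Real.sqrt (Ff z.1 * Gg z.2)) (fun z => |h z|)
      (by
        refine intOn_cell_of_contOn ?_
        have : ContinuousOn (fun z : Pt => (Real.sqrt (Ff z.1 * Gg z.2)) ^ 2) K2 :=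
          hsqrtFGon.pow 2
        exact this)
      (intOn_cell (hhc.abs.pow 2))
      (intOn_cell_of_contOn (hsqrtFGon.mul hhc.abs.continuousOn))
    rw [e1, e2] at this
    exact this
  -- step 3 : Fubini factorization
  have hIf_int : IntegrableOn If cell := intOn_cell hIfc
  have hIg_int : IntegrableOn Ig cell := intOn_cell hIgc
  have fub0 : ∫ z in cell, Ff z.1 * Gg z.2 =
      (∫ x in Set.Ioo (-1:ℝ) 1, Ff x) * ∫ y in Set.Ioo (-1:ℝ) 1, Gg y := by
    show ∫ z in (Set.Ioo (-1:ℝ) 1 ×ˢ Set.Ioo (-1:ℝ) 1), Ff z.1 * Gg z.2 = _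
    rw [Measure.volume_eq_prod, setIntegral_prod_mul]
  have hIf_int' : IntegrableOn If (Set.Ioo (-1:ℝ) 1 ×ˢ Set.Ioo (-1:ℝ) 1)
      ((volume : Measure ℝ).prod volume) := by
    rw [← Measure.volume_eq_prod]; exact hIf_int
  have hIg_int' : IntegrableOn Ig (Set.Ioo (-1:ℝ) 1 ×ˢ Set.Ioo (-1:ℝ) 1)
      ((volume : Measure ℝ).prod volume) := by
    rw [← Measure.volume_eq_prod]; exact hIg_int
  have fub1 : ∫ z in cell, If z = ∫ x in Set.Ioo (-1:ℝ) 1, Ff x := by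
    show ∫ z in (Set.Ioo (-1:ℝ) 1 ×ˢ Set.Ioo (-1:ℝ) 1), If z = _
    rw [Measure.volume_eq_prod, setIntegral_prod _ hIf_int']
  have fub2 : ∫ z in cell, Ig z = ∫ y in Set.Ioo (-1:ℝ) 1, Gg y := by
    show ∫ z in (Set.Ioo (-1:ℝ) 1 ×ˢ Set.Ioo (-1:ℝ) 1), Ig z = _
    rw [Measure.volume_eq_prod, setIntegral_prod _ hIg_int']
    exact integral_integral_swap (by rw [Measure.prod_restrict]; exact hIg_int')
  -- step 4 : bound the two factors
  have hL2sqf0 : 0 ≤ L2sq f := setIntegral_nonneg measurableSet_cell fun z _ => sq_nonneg _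
  have hL2sqp2f0 : 0 ≤ L2sq (p2 f) := setIntegral_nonneg measurableSet_cell fun z _ => sq_nonneg _
  have hL2sqg0 : 0 ≤ L2sq g := setIntegral_nonneg measurableSet_cell fun z _ => sq_nonneg _
  have hL2sqp1g0 : 0 ≤ L2sq (p1 g) := setIntegral_nonneg measurableSet_cell fun z _ => sq_nonneg _
  have hcs_f : ∫ z in cell, |f z * p2 f z| ≤ L2 f * L2 (p2 f) := by
    have e3 : ∫ z in cell, |f z * p2 f z| = ∫ z in cell, |f z| * |p2 f z| :=
      setIntegral_congr_fun measurableSet_cell fun z _ => abs_mul _ _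
    have e4 : ∫ z in cell, |f z| ^ 2 = L2sq f :=
      setIntegral_congr_fun measurableSet_cell fun z _ => sq_abs _
    have e5 : ∫ z in cell, |p2 f z| ^ 2 = L2sq (p2 f) :=
      setIntegral_congr_fun measurableSet_cell fun z _ => sq_abs _
    have := my_cs (volume.restrict cell) (fun z => |f z|) (fun z => |p2 f z|)
      (intOn_cell (hfc.abs.pow 2)) (intOn_cell (hp2f.abs.pow 2))
      (intOn_cell (hfc.abs.mul hp2f.abs))
    rw [e4, e5] at this
    rw [e3]
    exact this
  have hcs_g : ∫ z in cell, |g z * p1 g z| ≤ L2 g * L2 (p1 g) := by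
    have e3 : ∫ z in cell, |g z * p1 g z| = ∫ z in cell, |g z| * |p1 g z| :=
      setIntegral_congr_fun measurableSet_cell fun z _ => abs_mul _ _
    have e4 : ∫ z in cell, |g z| ^ 2 = L2sq g :=
      setIntegral_congr_fun measurableSet_cell fun z _ => sq_abs _
    have e5 : ∫ z in cell, |p1 g z| ^ 2 = L2sq (p1 g) :=
      setIntegral_congr_fun measurableSet_cell fun z _ => sq_abs _
    have := my_cs (volume.restrict cell) (fun z => |g z|) (fun z => |p1 g z|)
      (intOn_cell (hgc.abs.pow 2)) (intOn_cell (hp1g.abs.pow 2))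
      (intOn_cell (hgc.abs.mul hp1g.abs))
    rw [e4, e5] at this
    rw [e3]
    exact this
  have hIf_split : ∫ z in cell, If z =
      (1:ℝ)/2 * L2sq f + 2 * ∫ z in cell, |f z * p2 f z| := by
    rw [hIf_def]
    rw [integral_add (intOn_cell (continuous_const.fun_mul (hfc.fun_pow 2)))
      (intOn_cell (continuous_const.fun_mul (hfc.fun_mul hp2f).abs))]
    rw [integral_const_mul, integral_const_mul]
    rfl
  have hIg_split : ∫ z in cell, Ig z =
      (1:ℝ)/2 * L2sq g + 2 * ∫ z in cell, |g z * p1 g z| := by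
    rw [hIg_def]
    rw [integral_add (intOn_cell (continuous_const.fun_mul (hgc.fun_pow 2)))
      (intOn_cell (continuous_const.fun_mul (hgc.fun_mul hp1g).abs))]
    rw [integral_const_mul, integral_const_mul]
    rfl
  -- norms and comparisons
  have hL2f0 : 0 ≤ L2 f := Real.sqrt_nonneg _
  have hL2g0 : 0 ≤ L2 g := Real.sqrt_nonneg _
  have hL2h0 : 0 ≤ L2 h := Real.sqrt_nonneg _
  have hpf0 : 0 ≤ pairN f (p2 f) := Real.sqrt_nonneg _
  have hpg0 : 0 ≤ pairN g (p1 g) := Real.sqrt_nonneg _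
  have hL2f_le : L2 f ≤ pairN f (p2 f) :=
    Real.sqrt_le_sqrt (le_add_of_nonneg_right hL2sqp2f0)
  have hL2p2f_le : L2 (p2 f) ≤ pairN f (p2 f) :=
    Real.sqrt_le_sqrt (le_add_of_nonneg_left hL2sqf0)
  have hL2g_le : L2 g ≤ pairN g (p1 g) :=
    Real.sqrt_le_sqrt (le_add_of_nonneg_right hL2sqp1g0)
  have hL2p1g_le : L2 (p1 g) ≤ pairN g (p1 g) :=
    Real.sqrt_le_sqrt (le_add_of_nonneg_left hL2sqg0)
  have hL2sqf_eq : L2sq f = L2 f ^ 2 := (Real.sq_sqrt hL2sqf0).symm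
  have hL2sqg_eq : L2sq g = L2 g ^ 2 := (Real.sq_sqrt hL2sqg0).symm
  have hFtot : ∫ x in Set.Ioo (-1:ℝ) 1, Ff x ≤ 3 * (L2 f * pairN f (p2 f)) := by
    rw [← fub1, hIf_split, hL2sqf_eq]
    nlinarith [hcs_f, hL2f_le, hL2p2f_le, hL2f0, hpf0, Real.sqrt_nonneg (L2sq (p2 f))]
  have hGtot : ∫ y in Set.Ioo (-1:ℝ) 1, Gg y ≤ 3 * pairN g (p1 g) ^ 2 := by
    rw [← fub2, hIg_split, hL2sqg_eq]
    nlinarith [hcs_g, hL2g_le, hL2p1g_le, hL2g0, hpg0, Real.sqrt_nonneg (L2sq (p1 g))]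
  have hF_int0 : 0 ≤ ∫ x in Set.Ioo (-1:ℝ) 1, Ff x :=
    setIntegral_nonneg measurableSet_Ioo fun x _ => hFf0 x
  have hG_int0 : 0 ≤ ∫ y in Set.Ioo (-1:ℝ) 1, Gg y :=
    setIntegral_nonneg measurableSet_Ioo fun y _ => hGg0 y
  -- step 5 : final square root estimate
  set A := L2 f * pairN f (p2 f) with hA_def
  have hA0 : 0 ≤ A := mul_nonneg hL2f0 hpf0
  set B := pairN g (p1 g) with hB_def
  have hsq_key : (∫ x in Set.Ioo (-1:ℝ) 1, Ff x) * ∫ y in Set.Ioo (-1:ℝ) 1, Gg y ≤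
      (3 * Real.sqrt A * B) ^ 2 := by
    have hmul := mul_le_mul hFtot hGtot hG_int0 (by positivity)
    have : (3 * Real.sqrt A * B) ^ 2 = 3 * A * (3 * B ^ 2) := by
      rw [mul_pow, mul_pow, Real.sq_sqrt hA0]; ring
    rw [this]
    exact hmul
  have step3 : Real.sqrt ((∫ x in Set.Ioo (-1:ℝ) 1, Ff x) * ∫ y in Set.Ioo (-1:ℝ) 1, Gg y)
      ≤ 3 * Real.sqrt A * B := by
    calc Real.sqrt ((∫ x in Set.Ioo (-1:ℝ) 1, Ff x) * ∫ y in Set.Ioo (-1:ℝ) 1, Gg y)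
        ≤ Real.sqrt ((3 * Real.sqrt A * B) ^ 2) := Real.sqrt_le_sqrt hsq_key
      _ = 3 * Real.sqrt A * B := Real.sqrt_sq (by positivity)
  -- put everything together
  have main : (∫ z in cell, |f z * g z * h z|) ≤ 3 * Real.sqrt A * B * L2 h := by
    refine (step1.trans step2).trans ?_
    rw [fub0]
    have : Real.sqrt ((∫ x in Set.Ioo (-1:ℝ) 1, Ff x) * ∫ y in Set.Ioo (-1:ℝ) 1, Gg y) *
        Real.sqrt (L2sq h) ≤ (3 * Real.sqrt A * B) * Real.sqrt (L2sq h) :=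
      mul_le_mul_of_nonneg_right step3 (Real.sqrt_nonneg _)
    exact this
  constructor
  · exact main
  · refine main.trans ?_
    have hsA : Real.sqrt A ≤ pairN f (p2 f) := by
      have : A ≤ pairN f (p2 f) * pairN f (p2 f) :=
        mul_le_mul_of_nonneg_right hL2f_le hpf0
      calc Real.sqrt A ≤ Real.sqrt (pairN f (p2 f) * pairN f (p2 f)) := Real.sqrt_le_sqrt this
        _ = pairN f (p2 f) := Real.sqrt_mul_self hpf0
    have hB0 : 0 ≤ B := hpg0
    have : 3 * Real.sqrt A * B * L2 h ≤ 3 * pairN f (p2 f) * B * L2 h := by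
      have h1 : 3 * Real.sqrt A ≤ 3 * pairN f (p2 f) := by linarith
      exact mul_le_mul_of_nonneg_right
        (mul_le_mul_of_nonneg_right h1 hB0) hL2h0
    exact this
end
end

section
/- Let I ⊂ ℝ be an open interval containing 0, ζ : ℝ² × I → ℝ² be C² with det ∇ζ(·,t) = 1 for all t ∈ I, set u := ∂_t ζ and 𝒜 := (∇ζ)^{-T}. Let B : ℝ² × I → ℝ² be C¹ and satisfy the induction equation ∂_t B_i = Σ_{j,k} B_j 𝒜_{jk} ∂_k u_i (i.e. B_t = B·∇_𝒜 u). Then the vector field 𝒜ᵀB is independent of time: for every (y,t), Σ_j 𝒜_{jl}(y,t) B_j(y,t) = Σ_j 𝒜_{jl}(y,0) B_j(y,0) for l = 1,2; equivalently B(y,t) = ∇ζ(y,t) (𝒜(y,0))ᵀ B(y,0). -/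
open MeasureTheory

noncomputable section

/-- A space-time point `(y, t) ∈ ℝ² × ℝ`. -/
abbrev PtT := (ℝ × ℝ) × ℝ

/-- Spatial partial derivative in the first variable. -/
def sp1 (g : PtT → ℝ) : PtT → ℝ := fun p => fderiv ℝ (fun y : Pt => g (y, p.2)) p.1 (1, 0)

/-- Spatial partial derivative in the second variable. -/
def sp2 (g : PtT → ℝ) : PtT → ℝ := fun p => fderiv ℝ (fun y : Pt => g (y, p.2)) p.1 (0, 1)

/-- Time derivative. -/
def dt (g : PtT → ℝ) : PtT → ℝ := fun p => deriv (fun t => g (p.1, t)) p.2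

/-- First component of a vector field. -/
def c1 (v : PtT → Pt) : PtT → ℝ := fun p => (v p).1

/-- Second component of a vector field. -/
def c2 (v : PtT → Pt) : PtT → ℝ := fun p => (v p).2

/-- `𝒜₁₁ = ∂₂ζ₂`, for `𝒜 = (∇ζ)^{-T}` in the cofactor form valid when `det ∇ζ = 1`. -/
def A11 (ζ : PtT → Pt) : PtT → ℝ := sp2 (c2 ζ)

/-- `𝒜₁₂ = −∂₁ζ₂`. -/
def A12 (ζ : PtT → Pt) : PtT → ℝ := fun p => -(sp1 (c2 ζ) p)

/-- `𝒜₂₁ = −∂₂ζ₁`. -/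
def A21 (ζ : PtT → Pt) : PtT → ℝ := fun p => -(sp2 (c1 ζ) p)

/-- `𝒜₂₂ = ∂₁ζ₁`. -/
def A22 (ζ : PtT → Pt) : PtT → ℝ := sp1 (c1 ζ)

/-- `div_𝒜 X = Σ_{l,k} 𝒜_{lk} ∂_k X_l`. -/
def divA (ζ : PtT → Pt) (X : PtT → Pt) : PtT → ℝ :=
  fun p => A11 ζ p * sp1 (c1 X) p + A12 ζ p * sp2 (c1 X) p
    + A21 ζ p * sp1 (c2 X) p + A22 ζ p * sp2 (c2 X) p


lemma sp_full {g : PtT → ℝ} (y : Pt) (t : ℝ) (hg : DifferentiableAt ℝ g (y, t)) (v : Pt) :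
    fderiv ℝ (fun x : Pt => g (x, t)) y v = fderiv ℝ g (y, t) (v, 0) := by
  have hemb : HasFDerivAt (fun x : Pt => ((x, t) : PtT))
      ((ContinuousLinearMap.id ℝ Pt).prod (0 : Pt →L[ℝ] ℝ)) y :=
    (hasFDerivAt_id y).prodMk (hasFDerivAt_const t y)
  have h := hg.hasFDerivAt.comp y hemb
  rw [show (fun x : Pt => g (x, t)) = g ∘ (fun x : Pt => (x, t)) from rfl, h.fderiv]
  rfl

lemma timeDeriv {g : PtT → ℝ} (y : Pt) (s : ℝ) (hg : DifferentiableAt ℝ g (y, s)) :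
    HasDerivAt (fun r => g (y, r)) (fderiv ℝ g (y, s) ((0 : Pt), (1 : ℝ))) s := by
  have hemb : HasDerivAt (fun r : ℝ => ((y, r) : PtT)) (((0 : Pt), (1 : ℝ)) : PtT) s :=
    (hasDerivAt_const s y).prodMk (hasDerivAt_id s)
  exact hg.hasFDerivAt.comp_hasDerivAt s hemb

lemma dt_eq {g : PtT → ℝ} (y : Pt) (s : ℝ) (hg : DifferentiableAt ℝ g (y, s)) :
    dt g (y, s) = fderiv ℝ g (y, s) ((0 : Pt), (1 : ℝ)) :=
  (timeDeriv y s hg).deriv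

lemma dtHasDeriv {g : PtT → ℝ} (y : Pt) (s : ℝ) (hg : DifferentiableAt ℝ g (y, s)) :
    HasDerivAt (fun r => g (y, r)) (dt g (y, s)) s := by
  rw [dt_eq y s hg]; exact timeDeriv y s hg

lemma key {g : PtT → ℝ} (hg : ContDiff ℝ 2 g) (y : Pt) (t : ℝ) (v : Pt) :
    HasDerivAt (fun s : ℝ => fderiv ℝ (fun x : Pt => g (x, s)) y v)
      (fderiv ℝ (fun x : Pt => dt g (x, t)) y v) t := by
  have hgd : Differentiable ℝ g := hg.differentiable two_ne_zero
  have hG : ContDiff ℝ 1 (fderiv ℝ g) := hg.fderiv_right (by norm_num)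
  set τ : PtT := ((0 : Pt), (1 : ℝ)) with hτ
  set V : PtT := (v, (0 : ℝ)) with hV
  have happ : ∀ W : PtT, Differentiable ℝ (fun q => fderiv ℝ g q W) := fun W =>
    ((ContinuousLinearMap.apply ℝ ℝ W).contDiff.comp hG).differentiable one_ne_zero
  have e1 : (fun s : ℝ => fderiv ℝ (fun x : Pt => g (x, s)) y v)
      = fun s => fderiv ℝ g (y, s) V := by
    funext s; exact sp_full y s (hgd _) v
  have e2 : (fun x : Pt => dt g (x, t)) = fun x => fderiv ℝ g (x, t) τ := by
    funext x; exact dt_eq x t (hgd _)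
  rw [e1, e2]
  have h1 : HasDerivAt (fun s => fderiv ℝ g (y, s) V)
      (fderiv ℝ (fun q => fderiv ℝ g q V) (y, t) τ) t := timeDeriv y t (happ V (y, t))
  have hfd : HasFDerivAt (fderiv ℝ g) (fderiv ℝ (fderiv ℝ g) (y, t)) (y, t) :=
    ((hG.differentiable one_ne_zero) _).hasFDerivAt
  have hWd : ∀ W : PtT, fderiv ℝ (fun q => fderiv ℝ g q W) (y, t) =
      (ContinuousLinearMap.apply ℝ ℝ W).comp (fderiv ℝ (fderiv ℝ g) (y, t)) := fun W =>
    ((ContinuousLinearMap.apply ℝ ℝ W).hasFDerivAt.comp _ hfd).fderiv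
  have hsym := second_derivative_symmetric (f := g) (fun q => (hgd q).hasFDerivAt) hfd
  have e3 : fderiv ℝ (fun q => fderiv ℝ g q V) (y, t) τ
      = fderiv ℝ (fun x : Pt => fderiv ℝ g (x, t) τ) y v := by
    have l2 : fderiv ℝ (fun x : Pt => fderiv ℝ g (x, t) τ) y v
        = fderiv ℝ (fun q => fderiv ℝ g q τ) (y, t) V := sp_full y t (happ τ _) v
    rw [l2, hWd V, hWd τ]
    simp only [ContinuousLinearMap.coe_comp', Function.comp_apply,
      ContinuousLinearMap.apply_apply]
    exact hsym τ V
  rw [← e3]; exact h1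

/-- magnetic flux conservation in Lagrangian coordinates:
let `ζ` be `C²` with `det ∇ζ = 1` on `ℝ² × I`, `0 ∈ I`, `u := ∂_t ζ`, and
`𝒜 := (∇ζ)^{-T}` (cofactor form).  If `B` is `C¹` and satisfies the induction
equation `∂_t B_i = Σ_{j,k} B_j 𝒜_{jk} ∂_k u_i` on `ℝ² × I`, then `𝒜ᵀB` is
independent of time: `Σ_j 𝒜_{jl}(y,t) B_j(y,t) = Σ_j 𝒜_{jl}(y,0) B_j(y,0)`
for `l = 1, 2`, every `y` and every `t ∈ I`. -/
theorem statement9 (a b : ℝ) (ha : a < 0) (hb : 0 < b) (ζ B : PtT → Pt)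
    (hζ : ContDiff ℝ 2 ζ) (hB : ContDiff ℝ 1 B)
    (hdet : ∀ p : PtT, p.2 ∈ Set.Ioo a b →
      sp1 (c1 ζ) p * sp2 (c2 ζ) p - sp1 (c2 ζ) p * sp2 (c1 ζ) p = 1)
    (hind1 : ∀ p : PtT, p.2 ∈ Set.Ioo a b →
      dt (c1 B) p =
        c1 B p * (A11 ζ p * sp1 (dt (c1 ζ)) p + A12 ζ p * sp2 (dt (c1 ζ)) p)
          + c2 B p * (A21 ζ p * sp1 (dt (c1 ζ)) p + A22 ζ p * sp2 (dt (c1 ζ)) p))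
    (hind2 : ∀ p : PtT, p.2 ∈ Set.Ioo a b →
      dt (c2 B) p =
        c1 B p * (A11 ζ p * sp1 (dt (c2 ζ)) p + A12 ζ p * sp2 (dt (c2 ζ)) p)
          + c2 B p * (A21 ζ p * sp1 (dt (c2 ζ)) p + A22 ζ p * sp2 (dt (c2 ζ)) p)) :
    ∀ y : Pt, ∀ t ∈ Set.Ioo a b,
      (A11 ζ (y, t) * c1 B (y, t) + A21 ζ (y, t) * c2 B (y, t)
          = A11 ζ (y, 0) * c1 B (y, 0) + A21 ζ (y, 0) * c2 B (y, 0)) ∧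
      (A12 ζ (y, t) * c1 B (y, t) + A22 ζ (y, t) * c2 B (y, t)
          = A12 ζ (y, 0) * c1 B (y, 0) + A22 ζ (y, 0) * c2 B (y, 0)) := by
  have hc1 : ContDiff ℝ 2 (c1 ζ) := contDiff_fst.comp hζ
  have hc2 : ContDiff ℝ 2 (c2 ζ) := contDiff_snd.comp hζ
  have hB1 : Differentiable ℝ (c1 B) := (contDiff_fst.comp hB).differentiable one_ne_zero
  have hB2 : Differentiable ℝ (c2 B) := (contDiff_snd.comp hB).differentiable one_ne_zero
  intro y t ht
  have h0mem : (0 : ℝ) ∈ Set.Ioo a b := ⟨ha, hb⟩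
  have k1 : ∀ (g : PtT → ℝ), ContDiff ℝ 2 g → ∀ s : ℝ,
      HasDerivAt (fun r => sp1 g (y, r)) (sp1 (dt g) (y, s)) s :=
    fun g hg s => key hg y s (1, 0)
  have k2 : ∀ (g : PtT → ℝ), ContDiff ℝ 2 g → ∀ s : ℝ,
      HasDerivAt (fun r => sp2 g (y, r)) (sp2 (dt g) (y, s)) s :=
    fun g hg s => key hg y s (0, 1)
  have const : ∀ F : ℝ → ℝ, (∀ s ∈ Set.Ioo a b, HasDerivAt F 0 s) → F t = F 0 := by
    intro F hF
    refine (convex_Ioo a b).is_const_of_fderivWithin_eq_zero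
      (fun s hs => ((hF s hs).differentiableAt).differentiableWithinAt) ?_ ht h0mem
    intro s hs
    have h0 : HasFDerivAt F (0 : ℝ →L[ℝ] ℝ) s := by
      have h := (hF s hs).hasFDerivAt
      simpa using h
    exact h0.hasFDerivWithinAt.fderivWithin (isOpen_Ioo.uniqueDiffWithinAt hs)
  have hR : ∀ s ∈ Set.Ioo a b,
      sp1 (dt (c1 ζ)) (y, s) * sp2 (c2 ζ) (y, s) + sp1 (c1 ζ) (y, s) * sp2 (dt (c2 ζ)) (y, s)
        - (sp1 (dt (c2 ζ)) (y, s) * sp2 (c1 ζ) (y, s)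
            + sp1 (c2 ζ) (y, s) * sp2 (dt (c1 ζ)) (y, s)) = 0 := by
    intro s hs
    have hRder := ((k1 _ hc1 s).mul (k2 _ hc2 s)).sub ((k1 _ hc2 s).mul (k2 _ hc1 s))
    have hev : (fun r => sp1 (c1 ζ) (y, r) * sp2 (c2 ζ) (y, r)
        - sp1 (c2 ζ) (y, r) * sp2 (c1 ζ) (y, r)) =ᶠ[nhds s] fun _ => (1 : ℝ) := by
      filter_upwards [Ioo_mem_nhds hs.1 hs.2] with r hr
      exact hdet (y, r) hr
    exact hRder.unique ((hasDerivAt_const s (1 : ℝ)).congr_of_eventuallyEq hev)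
  constructor
  · refine const (fun r => A11 ζ (y, r) * c1 B (y, r) + A21 ζ (y, r) * c2 B (y, r)) ?_
    intro s hs
    have hA11 : HasDerivAt (fun r => A11 ζ (y, r)) (sp2 (dt (c2 ζ)) (y, s)) s := k2 _ hc2 s
    have hA21 : HasDerivAt (fun r => A21 ζ (y, r)) (-(sp2 (dt (c1 ζ)) (y, s))) s :=
      (k2 _ hc1 s).neg
    have hdB1 : HasDerivAt (fun r => c1 B (y, r)) (dt (c1 B) (y, s)) s := dtHasDeriv y s (hB1 _)
    have hdB2 : HasDerivAt (fun r => c2 B (y, r)) (dt (c2 B) (y, s)) s := dtHasDeriv y s (hB2 _)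
    have hd := (hA11.mul hdB1).add (hA21.mul hdB2)
    refine hd.congr_deriv ?_
    symm
    have h1 := hind1 (y, s) hs
    have h2 := hind2 (y, s) hs
    have hdt := hdet (y, s) hs
    have hr := hR s hs
    simp only [A11, A12, A21, A22] at h1 h2 ⊢
    linear_combination (-(sp2 (c2 ζ) (y, s))) * h1 + sp2 (c1 ζ) (y, s) * h2
      + (c1 B (y, s) * sp2 (dt (c2 ζ)) (y, s) - c2 B (y, s) * sp2 (dt (c1 ζ)) (y, s)) * hdt
      + (-(c1 B (y, s) * sp2 (c2 ζ) (y, s)) + c2 B (y, s) * sp2 (c1 ζ) (y, s)) * hr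
  · refine const (fun r => A12 ζ (y, r) * c1 B (y, r) + A22 ζ (y, r) * c2 B (y, r)) ?_
    intro s hs
    have hA12 : HasDerivAt (fun r => A12 ζ (y, r)) (-(sp1 (dt (c2 ζ)) (y, s))) s :=
      (k1 _ hc2 s).neg
    have hA22 : HasDerivAt (fun r => A22 ζ (y, r)) (sp1 (dt (c1 ζ)) (y, s)) s := k1 _ hc1 s
    have hdB1 : HasDerivAt (fun r => c1 B (y, r)) (dt (c1 B) (y, s)) s := dtHasDeriv y s (hB1 _)
    have hdB2 : HasDerivAt (fun r => c2 B (y, r)) (dt (c2 B) (y, s)) s := dtHasDeriv y s (hB2 _)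
    have hd := (hA12.mul hdB1).add (hA22.mul hdB2)
    refine hd.congr_deriv ?_
    symm
    have h1 := hind1 (y, s) hs
    have h2 := hind2 (y, s) hs
    have hdt := hdet (y, s) hs
    have hr := hR s hs
    simp only [A11, A12, A21, A22] at h1 h2 ⊢
    linear_combination sp1 (c2 ζ) (y, s) * h1 + (-(sp1 (c1 ζ) (y, s))) * h2
      + (-(c1 B (y, s) * sp1 (dt (c2 ζ)) (y, s)) + c2 B (y, s) * sp1 (dt (c1 ζ)) (y, s)) * hdt
      + (c1 B (y, s) * sp1 (c2 ζ) (y, s) - c2 B (y, s) * sp1 (c1 ζ) (y, s)) * hr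
end
end
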